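/- Let f1 ∈ F_{μ1,L1} and f2 ∈ F_{μ2,L2} with L1, L2 > 0, μ1 ≤ L1, μ2 ≤ L2, and let F := f1 − f2. For any DCA step from x to x⁺ one has (μ1 + μ2)/2 · ‖x − x⁺‖² ≤ F(x) − F(x⁺) ≤ (L1 + L2)/2 · ‖x − x⁺‖². In particular, if μ1 + μ2 ≥ 0 then F(x⁺) ≤ F(x), and if μ1 + μ2 > 0 and x⁺ ≠ x then F(x⁺) < F(x). -/

import Mathlib

open RealInnerProductSpace

variable {H : Type*} [NormedAddCommGroup H] [InnerProductSpace ℝ H]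

/-- `f` has lower curvature `μ`, i.e. `f - (μ/2)‖·‖²` is convex. -/
def HasLowerCurvature (μ : ℝ) (f : H → ℝ) : Prop :=
  ConvexOn ℝ Set.univ fun x => f x - μ / 2 * ‖x‖ ^ 2

/-- `f` has upper curvature `L`, i.e. `(L/2)‖·‖² - f` is convex. -/
def HasUpperCurvature (L : ℝ) (f : H → ℝ) : Prop :=
  ConvexOn ℝ Set.univ fun x => L / 2 * ‖x‖ ^ 2 - f x

/-- `g` is a subgradient of `f` (of lower curvature `μ`) at `x`. -/
def IsSubgradient (μ : ℝ) (f : H → ℝ) (x g : H) : Prop :=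
  ∀ y, f y ≥ f x + ⟪g, y - x⟫ + μ / 2 * ‖y - x‖ ^ 2


lemma key (μ L : ℝ) (hμL : μ ≤ L) (f : H → ℝ)
    (hup : HasUpperCurvature L f) (x g : H) (hg : IsSubgradient μ f x g) (y : H) :
    f y ≤ f x + ⟪g, y - x⟫ + L / 2 * ‖y - x‖ ^ 2 := by
  set d := y - x with hd
  have hy : y = x + d := by rw [hd]; abel
  have main : ∀ s : ℝ, 0 < s →
      f y ≤ f x + ⟪g, d⟫ + (L + (L - μ) * s) / 2 * ‖d‖ ^ 2 := by
    intro s hs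
    have h1s : (0:ℝ) < 1 + s := by linarith
    set p : H := x - s • d with hp
    -- subgradient inequality at p
    have hsub := hg p
    have hpx : p - x = (-s) • d := by rw [hp]; module
    have hipx : ⟪g, p - x⟫ = -s * ⟪g, d⟫ := by
      rw [hpx, real_inner_smul_right]
    have hnpx : ‖p - x‖ ^ 2 = s ^ 2 * ‖d‖ ^ 2 := by
      rw [hpx, norm_smul]; simp; ring_nf; rw [abs_of_pos hs]; ring
    rw [hipx, hnpx] at hsub
    -- convexity of L/2‖·‖² - f at p, y with weights 1/(1+s), s/(1+s)
    have ha : (0:ℝ) ≤ 1 / (1 + s) := by positivity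
    have hb : (0:ℝ) ≤ s / (1 + s) := by positivity
    have hab : 1 / (1+s) + s / (1+s) = 1 := by field_simp
    have hcomb : (1/(1+s)) • p + (s/(1+s)) • y = x := by
      rw [hp, hy]
      have : (1/(1+s)) • (x - s • d) + (s/(1+s)) • (x + d)
          = (1/(1+s) + s/(1+s)) • x + ((s/(1+s)) - (1/(1+s)) * s) • d := by module
      rw [this, hab]
      have : (s/(1+s)) - (1/(1+s)) * s = 0 := by field_simp; ring
      rw [this]; simp
    have hconv := hup.2 (Set.mem_univ p) (Set.mem_univ y) ha hb hab
    rw [hcomb] at hconv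
    simp only at hconv
    -- norm expansions
    have hnp : ‖p‖ ^ 2 = ‖x‖ ^ 2 - 2 * s * ⟪x, d⟫ + s ^ 2 * ‖d‖ ^ 2 := by
      have : p = x + (-s) • d := by rw [hp]; module
      rw [this, norm_add_sq_real, real_inner_smul_right, norm_smul]
      simp [abs_of_pos hs]; ring
    have hny : ‖y‖ ^ 2 = ‖x‖ ^ 2 + 2 * ⟪x, d⟫ + ‖d‖ ^ 2 := by
      rw [hy, norm_add_sq_real]
    have hD : (0:ℝ) ≤ ‖d‖ ^ 2 := by positivity
    -- multiply convexity by (1+s) and combine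
    have hconv' : (1+s) * (L / 2 * ‖x‖ ^ 2 - f x)
        ≤ (L / 2 * ‖p‖ ^ 2 - f p) + s * (L / 2 * ‖y‖ ^ 2 - f y) := by
      have := mul_le_mul_of_nonneg_left hconv (le_of_lt h1s)
      calc (1+s) * (L / 2 * ‖x‖ ^ 2 - f x)
          ≤ (1+s) * ((1/(1+s)) * (L / 2 * ‖p‖ ^ 2 - f p)
            + (s/(1+s)) * (L / 2 * ‖y‖ ^ 2 - f y)) := this
        _ = (L / 2 * ‖p‖ ^ 2 - f p) + s * (L / 2 * ‖y‖ ^ 2 - f y) := by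
            field_simp
    rw [hnp, hny] at hconv'
    -- goal: f y ≤ f x + ⟪g,d⟫ + (L + (L-μ)*s)/2 * ‖d‖^2
    nlinarith [mul_pos hs hs, hsub, hconv']
  -- limit argument
  have hD : (0:ℝ) ≤ ‖d‖ ^ 2 := by positivity
  have hC : (0:ℝ) ≤ (L - μ) / 2 * ‖d‖ ^ 2 := by
    have : (0:ℝ) ≤ L - μ := by linarith
    positivity
  refine le_of_forall_pos_le_add ?_
  intro ε hε
  set C := (L - μ) / 2 * ‖d‖ ^ 2 with hCdef
  have hs : (0:ℝ) < ε / (C + 1) := by positivity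
  have := main _ hs
  have h1 : (0:ℝ) < C + 1 := by linarith
  have ht : ε / (C + 1) * (C + 1) = ε := div_mul_cancel₀ _ h1.ne'
  have hCs : (L - μ) * (ε / (C + 1)) / 2 * ‖d‖ ^ 2 ≤ ε := by
    have heq : (L - μ) * (ε / (C + 1)) / 2 * ‖d‖ ^ 2 = ε / (C + 1) * C := by
      rw [hCdef]; ring
    rw [heq]
    nlinarith [ht, hs]
  nlinarith [this]

/-- sufficient condition for decrease of one DCA step. -/
theorem dca_step_decrease
    (mu1 mu2 L1 L2 : ℝ) (hL1 : 0 < L1) (hL2 : 0 < L2)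
    (hmu1 : mu1 ≤ L1) (hmu2 : mu2 ≤ L2)
    (f1 f2 : H → ℝ)
    (h1lo : HasLowerCurvature mu1 f1) (h1up : HasUpperCurvature L1 f1)
    (h2lo : HasLowerCurvature mu2 f2) (h2up : HasUpperCurvature L2 f2)
    (x xp g : H)
    (hg2 : IsSubgradient mu2 f2 x g) (hg1p : IsSubgradient mu1 f1 xp g) :
    ((mu1 + mu2) / 2 * ‖x - xp‖ ^ 2 ≤ (f1 x - f2 x) - (f1 xp - f2 xp) ∧
      (f1 x - f2 x) - (f1 xp - f2 xp) ≤ (L1 + L2) / 2 * ‖x - xp‖ ^ 2) ∧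
    (0 ≤ mu1 + mu2 → f1 xp - f2 xp ≤ f1 x - f2 x) ∧
    (0 < mu1 + mu2 → xp ≠ x → f1 xp - f2 xp < f1 x - f2 x) := by
  -- basic norm/inner symmetry facts
  have hnsym : ‖xp - x‖ = ‖x - xp‖ := by rw [← neg_sub, norm_neg]
  have hisym : ⟪g, xp - x⟫ = -⟪g, x - xp⟫ := by
    rw [← neg_sub x xp, inner_neg_right]
  -- lower bound
  have hA := hg1p x
  have hB := hg2 xp
  rw [hnsym, hisym] at hB
  have hlow : (mu1 + mu2) / 2 * ‖x - xp‖ ^ 2 ≤ (f1 x - f2 x) - (f1 xp - f2 xp) := by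
    linarith
  -- upper bound
  have hU1 := key mu1 L1 hmu1 f1 h1up xp g hg1p x
  have hU2 := key mu2 L2 hmu2 f2 h2up x g hg2 xp
  rw [hnsym, hisym] at hU2
  have hup : (f1 x - f2 x) - (f1 xp - f2 xp) ≤ (L1 + L2) / 2 * ‖x - xp‖ ^ 2 := by
    linarith
  refine ⟨⟨hlow, hup⟩, ?_, ?_⟩
  · intro hmu
    nlinarith [sq_nonneg ‖x - xp‖]
  · intro hmu hne
    have hpos : (0:ℝ) < ‖x - xp‖ ^ 2 := by
      have hne0 : x - xp ≠ 0 := sub_ne_zero.mpr (Ne.symm hne)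
      have : (0:ℝ) < ‖x - xp‖ := norm_pos_iff.mpr hne0
      positivity
    nlinarith
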